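/- Let R ≥ 1, N ≥ 1, let a_1, …, a_N ≥ 2 be integers, and let λ_{m i} ≥ 0 be reals with ∑_{m=1}^N λ_{m k} > 0 for the fixed index k ∈ {1,…,R}. Let L(v) = ∑_{m=1}^N ∑_{j=1}^R λ_{m j} v_j^{a_m+1} and G(v)_i = ∑_{m=1}^N λ_{m i} v_i^{a_m} − v_i L(v). Then e_k is an equilibrium of G (G(e_k) = 0), G is differentiable at e_k, and its derivative at e_k is the diagonal linear map with entry −2 ∑_{m=1}^N λ_{m k} in the k-th diagonal position and entry −∑_{m=1}^N λ_{m k} in every other diagonal position; in particular all its eigenvalues are negative, so e_k is a linearly stable equilibrium of the multi-term loading dynamics. -/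

import Mathlib

open Filter Topology

/-- `e_k` is an equilibrium of the multi-term loading vector field `G`, `G` is
differentiable there, and its derivative is the diagonal map with entry
`-2 ∑ₘ λ_{mk}` at position `k` and `-∑ₘ λ_{mk}` elsewhere; all entries are negative. -/
theorem stmt11 (R N : ℕ) (hR : 1 ≤ R) (hN : 1 ≤ N)
    (a : Fin N → ℕ) (ha : ∀ m, 2 ≤ a m)
    (lam : Fin N → Fin R → ℝ) (hnn : ∀ m i, 0 ≤ lam m i)
    (k : Fin R) (hk : 0 < ∑ m, lam m k)
    (G : (Fin R → ℝ) → (Fin R → ℝ))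
    (hG : G = fun v i => (∑ m, lam m i * (v i) ^ (a m))
        - v i * ∑ m, ∑ j, lam m j * (v j) ^ (a m + 1)) :
    G (Pi.single k 1) = 0 ∧
    HasFDerivAt (𝕜 := ℝ) G
      (ContinuousLinearMap.pi fun i =>
        (if i = k then -2 * ∑ m, lam m k else -∑ m, lam m k) • ContinuousLinearMap.proj i)
      (Pi.single k 1) ∧
    ∀ i : Fin R, (if i = k then -2 * ∑ m, lam m k else -∑ m, lam m k) < 0 := by
  set e : Fin R → ℝ := Pi.single k 1 with he
  have heval : ∀ j : Fin R, e j = if j = k then 1 else 0 := by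
    intro j; simp [he, Pi.single_apply]
  refine ⟨?_, ?_, ?_⟩
  · -- equilibrium
    funext i
    simp only [hG, Pi.zero_apply]
    have hL : ∑ m, ∑ j, lam m j * (e j) ^ (a m + 1) = ∑ m, lam m k := by
      refine Finset.sum_congr rfl fun m _ => ?_
      rw [Finset.sum_eq_single k]
      · rw [heval k]; simp
      · intro j _ hj
        rw [heval j]
        have : a m + 1 ≠ 0 := by omega
        simp [hj]
      · simp
    rw [hL]
    by_cases hik : i = k
    · subst hik
      rw [heval i]
      simp
    · rw [heval i, if_neg hik]
      have : ∀ m : Fin N, lam m i * (0:ℝ) ^ (a m) = 0 := by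
        intro m
        have : a m ≠ 0 := by have := ha m; omega
        simp [this]
      simp [Finset.sum_congr rfl fun m _ => this m]
  · -- derivative
    rw [hasFDerivAt_pi']
    intro i
    rw [ContinuousLinearMap.proj_pi]
    simp only [hG]
    have hproj : ∀ j : Fin R, HasFDerivAt (fun v : Fin R → ℝ => v j)
        ((ContinuousLinearMap.proj j : (Fin R → ℝ) →L[ℝ] ℝ)) e := fun j =>
      ((ContinuousLinearMap.proj j : (Fin R → ℝ) →L[ℝ] ℝ)).hasFDerivAt
    have hpow : ∀ (j : Fin R) (n : ℕ), HasFDerivAt (fun v : Fin R → ℝ => (v j) ^ n)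
        (((n : ℝ) * (e j) ^ (n - 1)) • ContinuousLinearMap.proj j) e :=
      fun j n => (hasDerivAt_pow n (e j)).comp_hasFDerivAt e (hproj j)
    have h1 : HasFDerivAt (fun v : Fin R → ℝ => ∑ m, lam m i * (v i) ^ (a m))
        (∑ m, lam m i • (((a m : ℝ) * (e i) ^ (a m - 1)) • ContinuousLinearMap.proj i)) e :=
      HasFDerivAt.fun_sum fun m _ => ((hpow i (a m)).const_mul (lam m i))
    have hL : HasFDerivAt (fun v : Fin R → ℝ => ∑ m, ∑ j, lam m j * (v j) ^ (a m + 1))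
        (∑ m, ∑ j, lam m j • ((((a m + 1 : ℕ) : ℝ) * (e j) ^ (a m)) • ContinuousLinearMap.proj j)) e :=
      HasFDerivAt.fun_sum fun m _ => HasFDerivAt.fun_sum fun j _ =>
        ((hpow j (a m + 1)).const_mul (lam m j))
    have h2 : HasFDerivAt (fun v : Fin R → ℝ =>
          v i * ∑ m, ∑ j, lam m j * (v j) ^ (a m + 1))
        (e i • (∑ m, ∑ j, lam m j • ((((a m + 1 : ℕ) : ℝ) * (e j) ^ (a m)) • ContinuousLinearMap.proj j))
          + (∑ m, ∑ j, lam m j * (e j) ^ (a m + 1)) • ContinuousLinearMap.proj i) e :=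
      (hproj i).mul hL
    have h3 := h1.sub h2
    refine h3.congr_fderiv ?_
    ext h
    simp only [ContinuousLinearMap.coe_sub', Pi.sub_apply, ContinuousLinearMap.coe_smul',
      Pi.smul_apply, ContinuousLinearMap.sum_apply, ContinuousLinearMap.smul_apply,
      ContinuousLinearMap.proj_apply, ContinuousLinearMap.add_apply, smul_eq_mul]
    by_cases hik : i = k
    · subst hik
      have h1v : ∀ m : Fin N, lam m i * (((a m : ℝ) * (e i) ^ (a m - 1)) * h i)
          = lam m i * (a m : ℝ) * h i := by
        intro m; rw [heval i]; simp [mul_assoc]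
      have hLv : ∀ m : Fin N, ∑ j, lam m j * ((((a m + 1 : ℕ) : ℝ) * (e j) ^ (a m)) * h j)
          = lam m i * ((a m : ℝ) + 1) * h i := by
        intro m
        rw [Finset.sum_eq_single i]
        · rw [heval i]; simp; ring
        · intro j _ hj
          rw [heval j]
          have : a m ≠ 0 := by have := ha m; omega
          simp [hj, this]
        · simp
      have hLe : ∑ m, ∑ j, lam m j * (e j) ^ (a m + 1) = ∑ m, lam m i := by
        refine Finset.sum_congr rfl fun m _ => ?_
        rw [Finset.sum_eq_single i]
        · rw [heval i]; simp
        · intro j _ hj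
          rw [heval j]; simp [hj]
        · simp
      rw [Finset.sum_congr rfl fun m _ => h1v m, Finset.sum_congr rfl fun m _ => hLv m, hLe,
        heval i]
      simp only [if_pos rfl, if_true, eq_self_iff_true, one_smul, one_mul]
      rw [← Finset.sum_mul, ← Finset.sum_mul]
      have hsplit : ∑ m, lam m i * ((a m : ℝ) + 1)
          = (∑ m, lam m i * (a m : ℝ)) + ∑ m, lam m i := by
        rw [← Finset.sum_add_distrib]
        exact Finset.sum_congr rfl fun m _ => by ring
      rw [hsplit]
      ring
    · have h1v : ∀ m : Fin N, lam m i * (((a m : ℝ) * (e i) ^ (a m - 1)) * h i) = 0 := by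
        intro m
        rw [heval i]
        have : a m - 1 ≠ 0 := by have := ha m; omega
        simp [hik, this]
      have hLe : ∑ m, ∑ j, lam m j * (e j) ^ (a m + 1) = ∑ m, lam m k := by
        refine Finset.sum_congr rfl fun m _ => ?_
        rw [Finset.sum_eq_single k]
        · rw [heval k]; simp
        · intro j _ hj
          rw [heval j]; simp [hj]
        · simp
      rw [Finset.sum_congr rfl fun m _ => h1v m, hLe, heval i]
      simp [hik]
  · intro i
    by_cases hik : i = k
    · subst hik; rw [if_pos rfl]; nlinarith
    · rw [if_neg hik]; linarith
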